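/- Let G be a finite abelian group and ℛ a saturated transfer system on G. Suppose there exist a sub-inductor J on G and an R-stable diagram D on G such that every D(H) is closed under complex conjugation and, for every ℛ-cofibrant subgroup H ≤ G and every proper subgroup K < H, I_K^H(D(K)) is not contained in D(H) ∪ Res_J(H). Then there exists U ∈ 𝒰_G with Tr(U) = ℛ. -/

import Mathlib

open scoped Classical

/-- The character group of `G`: monoid homomorphisms to `ℂˣ`. -/
abbrev CharGp (G : Type*) [Group G] := G →* ℂˣ

/-- Complex conjugation acting on characters: `χ ↦ χ̄`. -/
noncomputable def charConj {G : Type*} [Group G] (χ : CharGp G) : CharGp G :=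
  (Units.map (starRingEnd ℂ).toMonoidHom).comp χ

/-- Restriction of characters along an inclusion of subgroups: `R_K^H` on elements. -/
def resChar {G : Type*} [Group G] {K H : Subgroup G} (h : K ≤ H) (χ : CharGp H) : CharGp K :=
  χ.comp (Subgroup.inclusion h)

/-- Restriction of a character of `G` itself to a subgroup. -/
def resCharTop {G : Type*} [Group G] (K : Subgroup G) (χ : CharGp G) : CharGp K :=
  χ.comp K.subtype

/-- A transfer system on a finite group `G`: a partial order on subgroups refining
inclusion, closed under conjugation and under intersection-pullback. -/
structure TransferSystem (G : Type*) [Group G] where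
  rel : Subgroup G → Subgroup G → Prop
  le_of_rel : ∀ {K H : Subgroup G}, rel K H → K ≤ H
  refl : ∀ H : Subgroup G, rel H H
  trans : ∀ {K L H : Subgroup G}, rel K L → rel L H → rel K H
  conj : ∀ {K H : Subgroup G} (g : G), rel K H →
    rel (K.map (MulAut.conj g).toMonoidHom) (H.map (MulAut.conj g).toMonoidHom)
  inf_rel : ∀ {K H : Subgroup G} (L : Subgroup G), rel K H → L ≤ H → rel (K ⊓ L) L

/-- A transfer system is saturated if `(K,H) ∈ ℛ` and `K ≤ L ≤ H` imply `(L,H) ∈ ℛ`. -/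
def TransferSystem.Saturated {G : Type*} [Group G] (R : TransferSystem G) : Prop :=
  ∀ ⦃K L H : Subgroup G⦄, R.rel K H → K ≤ L → L ≤ H → R.rel L H

/-- A subgroup `H` is `ℛ`-cofibrant if there is no proper `K < H` with `(K,H) ∈ ℛ`. -/
def TransferSystem.Cofibrant {G : Type*} [Group G] (R : TransferSystem G)
    (H : Subgroup G) : Prop :=
  ¬ ∃ K : Subgroup G, K < H ∧ R.rel K H

/-- `𝒰_G`: subsets of `Ĝ` containing the trivial character and closed under conjugation. -/
def UnivSet (G : Type*) [Group G] : Set (Set (CharGp G)) :=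
  {U | (1 : CharGp G) ∈ U ∧ ∀ χ ∈ U, charConj χ ∈ U}

/-- `Tr(U)`: the relation `{(K,H) : K ≤ H and I_K^H(R_K^G(U)) ⊆ R_H^G(U)}`. -/
def TrRel {G : Type*} [Group G] (U : Set (CharGp G)) (K H : Subgroup G) : Prop :=
  ∃ h : K ≤ H, resChar h ⁻¹' (resCharTop K '' U) ⊆ resCharTop H '' U

/-- The sub-inductor axioms for a family `J_K^H : 𝒫(K̂) → 𝒫(Ĥ)`. -/
structure IsSubInductor {G : Type*} [CommGroup G]
    (J : ∀ K H : Subgroup G, K ≤ H → Set (CharGp K) → Set (CharGp H)) : Prop where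
  conj_comm : ∀ {K H : Subgroup G} (h : K ≤ H) (U : Set (CharGp K)),
    J K H h (charConj '' U) = charConj '' J K H h U
  union_comm : ∀ {K H : Subgroup G} (h : K ≤ H) (s : Set (Set (CharGp K))),
    J K H h (⋃₀ s) = ⋃ U ∈ s, J K H h U
  comp : ∀ {K L H : Subgroup G} (h1 : K ≤ L) (h2 : L ≤ H) (U : Set (CharGp K)),
    J L H h2 (J K L h1 U) = J K H (h1.trans h2) U
  res_cover : ∀ {K H : Subgroup G} (h : K ≤ H) (U : Set (CharGp K)),
    resChar h '' J K H h U = U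
  res_le : ∀ {K L H : Subgroup G} (hK : K ≤ H) (hL : L ≤ H) (U : Set (CharGp L)),
    resChar hK '' J L H hL U ⊆
      J (K ⊓ L) K inf_le_left (resChar (inf_le_right : K ⊓ L ≤ L) '' U)
  one_mem : ∀ {K H : Subgroup G} (h : K ≤ H), (1 : CharGp H) ∈ J K H h {1}

/-- The residue of a sub-inductor: `Res_J(H) = ⋃_{K < H} J_K^H(K̂)`. -/
def resJ {G : Type*} [CommGroup G]
    (J : ∀ K H : Subgroup G, K ≤ H → Set (CharGp K) → Set (CharGp H))
    (H : Subgroup G) : Set (CharGp H) :=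
  ⋃ (K : Subgroup G) (h : K < H), J K H h.le Set.univ

/-- A diagram is `R`-stable if `R_K^H(D(H)) ⊆ D(K)` for all `K ≤ H`. -/
def RStable {G : Type*} [CommGroup G] (D : ∀ H : Subgroup G, Set (CharGp H)) : Prop :=
  ∀ {K H : Subgroup G} (h : K ≤ H), resChar h '' D H ⊆ D K

/-- A tight pair: an `R`-stable conjugation-invariant diagram together with a
sub-inductor satisfying the two non-containment constraints. -/
structure IsTightPair {G : Type*} [CommGroup G]
    (D : ∀ H : Subgroup G, Set (CharGp H))
    (J : ∀ K H : Subgroup G, K ≤ H → Set (CharGp K) → Set (CharGp H)) : Prop where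
  rstable : RStable D
  subind : IsSubInductor J
  conj_inv : ∀ H : Subgroup G, ∀ χ ∈ D H, charConj χ ∈ D H
  ind_not_le : ∀ {K H : Subgroup G} (h : K < H),
    ¬ (resChar h.le ⁻¹' D K ⊆ D H ∪ resJ J H)
  not_res : ∀ H : Subgroup G, ¬ (D H ⊆ resJ J H)

section Basic
variable {G : Type*} [CommGroup G]

@[simp] lemma resChar_resChar {K L H : Subgroup G} (h1 : K ≤ L) (h2 : L ≤ H) (χ : CharGp H) :
    resChar h1 (resChar h2 χ) = resChar (h1.trans h2) χ := by
  ext x; rfl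

@[simp] lemma resChar_rfl {K : Subgroup G} (χ : CharGp K) : resChar le_rfl χ = χ := by
  ext x; rfl

@[simp] lemma resChar_resCharTop {K H : Subgroup G} (h : K ≤ H) (χ : CharGp G) :
    resChar h (resCharTop H χ) = resCharTop K χ := by
  ext x; rfl

@[simp] lemma resChar_one {K H : Subgroup G} (h : K ≤ H) : resChar h (1 : CharGp H) = 1 := by
  ext x; rfl

@[simp] lemma resCharTop_one {K : Subgroup G} : resCharTop K (1 : CharGp G) = 1 := by
  ext x; rfl

@[simp] lemma charConj_one {H : Type*} [Group H] : charConj (1 : CharGp H) = 1 := by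
  ext x; simp [charConj]

lemma resChar_charConj {K H : Subgroup G} (h : K ≤ H) (χ : CharGp H) :
    resChar h (charConj χ) = charConj (resChar h χ) := by
  ext x; rfl

lemma resCharTop_charConj {K : Subgroup G} (χ : CharGp G) :
    resCharTop K (charConj χ) = charConj (resCharTop K χ) := by
  ext x; rfl

end Basic

noncomputable instance : RootableBy ℂˣ ℕ :=
  rootableByOfPowLeftSurj _ _ (by
    intro n hn x
    obtain ⟨z, hz⟩ := IsAlgClosed.exists_pow_nat_eq (x : ℂ) (Nat.pos_of_ne_zero hn)
    have hz0 : z ≠ 0 := by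
      intro h0
      rw [h0, zero_pow hn] at hz
      exact x.ne_zero hz.symm
    refine ⟨Units.mk0 z hz0, ?_⟩
    ext
    push_cast
    exact hz)

noncomputable instance : RootableBy ℂˣ ℤ := Group.rootableByIntOfRootableByNat ℂˣ

noncomputable instance : DivisibleBy (Additive ℂˣ) ℤ where
  div a n := Additive.ofMul (RootableBy.root a.toMul n)
  div_zero a := by
    have h1 : RootableBy.root a.toMul (0 : ℤ) = 1 := RootableBy.root_zero _
    show Additive.ofMul (RootableBy.root (Additive.toMul a) (0:ℤ)) = 0
    rw [h1]
    rfl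
  div_cancel := by
    intro n a h
    have h1 : (RootableBy.root a.toMul n) ^ n = a.toMul := RootableBy.root_cancel _ h
    have := congrArg Additive.ofMul h1
    rwa [ofMul_zpow] at this

/-- Extension of characters along the inclusion of a subgroup of a commutative group. -/
theorem char_extend {A : Type*} [CommGroup A] (B : Subgroup A) (χ : CharGp ↥B) :
    ∃ ψ : CharGp A, ψ.comp B.subtype = χ := by
  have hb : Module.Baer ℤ (Additive ℂˣ) := Module.Baer.of_divisible _
  obtain ⟨h, hh⟩ := hb.extension_property_addMonoidHom
    (MonoidHom.toAdditive B.subtype) (fun x y hxy => by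
      have : (x.toMul : A) = y.toMul := congrArg Additive.toMul hxy
      exact Additive.toMul.injective (Subtype.ext this))
    (MonoidHom.toAdditive χ)
  refine ⟨MonoidHom.toAdditive.symm h, ?_⟩
  refine MonoidHom.ext fun x => ?_
  have h2 := DFunLike.congr_fun hh (Additive.ofMul x)
  have h3 : Additive.toMul (h (MonoidHom.toAdditive B.subtype (Additive.ofMul x)))
      = Additive.toMul (MonoidHom.toAdditive χ (Additive.ofMul x)) := congrArg Additive.toMul h2
  exact h3

theorem resCharTop_surjective {G : Type*} [CommGroup G] (K : Subgroup G) :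
    Function.Surjective (resCharTop K) := by
  intro χ
  obtain ⟨ψ, hψ⟩ := char_extend K χ
  exact ⟨ψ, hψ⟩

theorem resChar_surjective {G : Type*} [CommGroup G] {K H : Subgroup G} (h : K ≤ H) :
    Function.Surjective (resChar h) := by
  intro χ
  obtain ⟨ψ, hψ⟩ := char_extend (K.subgroupOf H)
    (χ.comp (Subgroup.subgroupOfEquivOfLe h).toMonoidHom)
  refine ⟨ψ, MonoidHom.ext fun x => ?_⟩
  have hx : Subgroup.inclusion h x ∈ K.subgroupOf H := by
    simpa [Subgroup.mem_subgroupOf] using x.2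
  have := DFunLike.congr_fun hψ (⟨Subgroup.inclusion h x, hx⟩ : ↥(K.subgroupOf H))
  simpa [Subgroup.subgroupOfEquivOfLe, resChar] using this

/-- Gluing characters on two subgroups agreeing on the intersection. -/
theorem char_glue {G : Type*} [CommGroup G] (K N : Subgroup G)
    (χ : CharGp K) (ψ : CharGp N)
    (hagree : ∀ (x : G) (hK : x ∈ K) (hN : x ∈ N), χ ⟨x, hK⟩ = ψ ⟨x, hN⟩) :
    ∃ θ : CharGp G, resCharTop K θ = χ ∧ resCharTop N θ = ψ := by
  classical
  let μ : ↥K × ↥N →* G := (K.subtype.comp (MonoidHom.fst _ _)) * (N.subtype.comp (MonoidHom.snd _ _))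
  let φ : ↥K × ↥N →* ℂˣ := (χ.comp (MonoidHom.fst _ _)) * (ψ.comp (MonoidHom.snd _ _))
  have hker : μ.ker ≤ φ.ker := by
    rintro ⟨a, b⟩ hab
    have hab' : (a : G) * (b : G) = 1 := hab
    have haK : (a : G) ∈ K := a.2
    have hba : (b : G) * (a : G) = 1 := by rw [mul_comm]; exact hab'
    have haN : (a : G) ∈ N := by
      have h4 : (a : G) = (b : G)⁻¹ := eq_inv_of_mul_eq_one_right hba
      rw [h4]; exact N.inv_mem b.2
    have hb : (b : ↥N) = (⟨(a : G), haN⟩ : ↥N)⁻¹ := by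
      apply Subtype.ext
      show (b : G) = (a : G)⁻¹
      exact eq_inv_of_mul_eq_one_right hab'
    show φ (a, b) = 1
    have : φ (a, b) = χ a * ψ b := rfl
    rw [this, hb, map_inv, ← hagree (a : G) haK haN, mul_inv_cancel]
  -- factor φ through the range of μ
  let e := QuotientGroup.quotientKerEquivRange μ
  let θ₀ : ↥μ.range →* ℂˣ := (QuotientGroup.lift μ.ker φ (fun x hx => hker hx)).comp
    (e.symm.toMonoidHom)
  have hθ₀ : ∀ x : ↥K × ↥N, θ₀ ⟨μ x, ⟨x, rfl⟩⟩ = φ x := by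
    intro x
    have h1 : e (QuotientGroup.mk x) = ⟨μ x, ⟨x, rfl⟩⟩ := rfl
    have h2 : e.symm ⟨μ x, ⟨x, rfl⟩⟩ = QuotientGroup.mk x := by
      rw [← h1, MulEquiv.symm_apply_apply]
    show (QuotientGroup.lift μ.ker φ (fun x hx => hker hx)) (e.symm ⟨μ x, ⟨x, rfl⟩⟩) = φ x
    rw [h2]
    rfl
  obtain ⟨θ, hθ⟩ := char_extend μ.range θ₀
  have key : ∀ x : ↥K × ↥N, θ (μ x) = φ x := by
    intro x
    have := DFunLike.congr_fun hθ (⟨μ x, ⟨x, rfl⟩⟩ : ↥μ.range)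
    rw [← hθ₀ x]
    exact this
  refine ⟨θ, MonoidHom.ext fun k => ?_, MonoidHom.ext fun n => ?_⟩
  · have := key (k, 1)
    simpa [μ, φ, resCharTop] using this
  · have := key (1, n)
    simpa [μ, φ, resCharTop] using this

section Msub
variable {G : Type*} [CommGroup G] [Fintype G] (R : TransferSystem G)

lemma subgroup_card_lt {K C : Subgroup G} (h : K < C) : Nat.card ↥K < Nat.card ↥C := by
  have : ((K : Set G)) ⊂ (C : Set G) := by
    exact_mod_cast SetLike.lt_iff_le_and_exists.mp h |> fun _ => h
  exact Set.Finite.card_lt_card (Set.toFinite _) (by exact_mod_cast h)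

noncomputable def msub (H : Subgroup G) : Subgroup G :=
  (wellFounded_lt (α := Subgroup G)).min {K : Subgroup G | R.rel K H} ⟨H, R.refl H⟩

lemma msub_rel (H : Subgroup G) : R.rel (msub R H) H := by
  have h := (wellFounded_lt (α := Subgroup G)).min_mem
    {K : Subgroup G | R.rel K H} ⟨H, R.refl H⟩
  exact h

lemma msub_le (H : Subgroup G) : msub R H ≤ H := R.le_of_rel (msub_rel R H)

lemma msub_min {K H : Subgroup G} (h : R.rel K H) : msub R H ≤ K := by
  have hmem : R.rel (msub R H ⊓ K) H :=
    R.trans (R.inf_rel K (msub_rel R H) (R.le_of_rel h)) h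
  have hnlt := (wellFounded_lt (α := Subgroup G)).not_lt_min
    {K : Subgroup G | R.rel K H} hmem
  have heq : msub R H ⊓ K = msub R H := by
    rcases lt_or_eq_of_le (inf_le_left : msub R H ⊓ K ≤ msub R H) with h' | h'
    · exact absurd h' hnlt
    · exact h'
  rw [← heq]; exact inf_le_right

lemma msub_mono {K H : Subgroup G} (h : K ≤ H) : msub R K ≤ msub R H := by
  have : R.rel (msub R H ⊓ K) K := R.inf_rel K (msub_rel R H) h
  exact (msub_min R this).trans inf_le_left

lemma msub_idem (H : Subgroup G) : msub R (msub R H) = msub R H := by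
  refine le_antisymm (msub_le R _) ?_
  exact msub_min R (R.trans (msub_rel R (msub R H)) (msub_rel R H))

lemma msub_cofibrant (H : Subgroup G) : R.Cofibrant (msub R H) := by
  rintro ⟨K, hlt, hrel⟩
  have := msub_min R hrel
  rw [msub_idem] at this
  exact absurd (this.trans_lt hlt) (lt_irrefl _)

lemma rel_iff_msub (hR : R.Saturated) {K H : Subgroup G} :
    R.rel K H ↔ msub R H ≤ K ∧ K ≤ H :=
  ⟨fun h => ⟨msub_min R h, R.le_of_rel h⟩, fun ⟨h1, h2⟩ => hR (msub_rel R H) h1 h2⟩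

end Msub


section FFdef
variable {G : Type*} [CommGroup G] [Fintype G]

lemma J_mono {J : ∀ K H : Subgroup G, K ≤ H → Set (CharGp K) → Set (CharGp H)}
    (hJ : IsSubInductor J) {K H : Subgroup G} (h : K ≤ H) {U V : Set (CharGp K)}
    (hUV : U ⊆ V) : J K H h U ⊆ J K H h V := by
  have h1 := hJ.union_comm h {U, V}
  rw [Set.sUnion_pair, Set.union_eq_self_of_subset_left hUV, Set.biUnion_pair] at h1
  rw [h1]
  exact Set.subset_union_left

variable (R : TransferSystem G)
  (J : ∀ K H : Subgroup G, K ≤ H → Set (CharGp K) → Set (CharGp H))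
  (D : ∀ H : Subgroup G, Set (CharGp H))

noncomputable def FF : (C : Subgroup G) → Set (CharGp C) := fun C =>
  {1} ∪ D C ∪ ⋃ (K : Subgroup G) (h : K < C),
    J K C h.le (resChar (msub_le R K) ⁻¹' FF (msub R K))
termination_by C => Nat.card ↥C
decreasing_by
  exact lt_of_le_of_lt (Subgroup.card_le_of_le (msub_le R K)) (subgroup_card_lt h)

lemma FF_eq (C : Subgroup G) : FF R J D C =
    {1} ∪ D C ∪ ⋃ (K : Subgroup G) (h : K < C),
      J K C h.le (resChar (msub_le R K) ⁻¹' FF R J D (msub R K)) := by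
  rw [FF]

lemma one_mem_FF (C : Subgroup G) : (1 : CharGp C) ∈ FF R J D C := by
  rw [FF_eq]
  exact Set.mem_union_left _ (Set.mem_union_left _ rfl)

lemma D_subset_FF (C : Subgroup G) : D C ⊆ FF R J D C := by
  rw [FF_eq]
  exact fun x hx => Set.mem_union_left _ (Set.mem_union_right _ hx)

lemma Jterm_subset_FF {K C : Subgroup G} (h : K < C) :
    J K C h.le (resChar (msub_le R K) ⁻¹' FF R J D (msub R K)) ⊆ FF R J D C := by
  conv_rhs => rw [FF_eq R J D C]
  intro x hx
  apply Set.mem_union_right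
  rw [Set.mem_iUnion]
  refine ⟨K, ?_⟩
  rw [Set.mem_iUnion]
  exact ⟨h, hx⟩

lemma one_mem_resJ {J} (hJ : IsSubInductor J) {C : Subgroup G} (hbot : (⊥ : Subgroup G) < C) :
    (1 : CharGp C) ∈ resJ J C := by
  have h1 : (1 : CharGp C) ∈ J ⊥ C hbot.le Set.univ :=
    J_mono hJ hbot.le (Set.subset_univ _) (hJ.one_mem hbot.le)
  exact Set.mem_iUnion.2 ⟨⊥, Set.mem_iUnion.2 ⟨hbot, h1⟩⟩

lemma FF_subset {J} (hJ : IsSubInductor J) (C : Subgroup G) :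
    FF R J D C ⊆ {1} ∪ D C ∪ resJ J C := by
  rw [FF_eq]
  refine Set.union_subset (Set.subset_union_left) ?_
  refine Set.iUnion_subset fun K => Set.iUnion_subset fun h => ?_
  intro x hx
  refine Set.mem_union_right _ (Set.mem_iUnion.2 ⟨K, Set.mem_iUnion.2 ⟨h, ?_⟩⟩)
  exact J_mono hJ h.le (Set.subset_univ _) hx

variable {R J D}

lemma conj_FF (hJ : IsSubInductor J)
    (hconj : ∀ H : Subgroup G, ∀ χ ∈ D H, charConj χ ∈ D H) :
    ∀ (n : ℕ) (C : Subgroup G), Nat.card ↥C ≤ n →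
      ∀ χ ∈ FF R J D C, charConj χ ∈ FF R J D C := by
  intro n
  induction n with
  | zero => intro C hC; have := Nat.card_pos (α := ↥C); omega
  | succ n IH =>
    intro C hC χ hχ
    rw [FF_eq] at hχ
    rcases hχ with (h1 | h1) | h1
    · rw [Set.mem_singleton_iff] at h1
      subst h1
      rw [charConj_one]
      exact one_mem_FF R J D C
    · exact D_subset_FF R J D C (hconj C χ h1)
    · rw [Set.mem_iUnion] at h1
      obtain ⟨K, h1⟩ := h1
      rw [Set.mem_iUnion] at h1
      obtain ⟨hKC, h1⟩ := h1
      have hcard : Nat.card ↥(msub R K) ≤ n := by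
        have := lt_of_le_of_lt (Subgroup.card_le_of_le (msub_le R K)) (subgroup_card_lt hKC)
        omega
      have hsub : charConj '' (resChar (msub_le R K) ⁻¹' FF R J D (msub R K)) ⊆
          resChar (msub_le R K) ⁻¹' FF R J D (msub R K) := by
        rintro _ ⟨χ', hχ', rfl⟩
        show resChar (msub_le R K) (charConj χ') ∈ FF R J D (msub R K)
        rw [resChar_charConj]
        exact IH (msub R K) hcard (resChar (msub_le R K) χ') hχ'
      have h2 : charConj χ ∈ J K C hKC.le
          (charConj '' (resChar (msub_le R K) ⁻¹' FF R J D (msub R K))) := by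
        rw [hJ.conj_comm]
        exact Set.mem_image_of_mem _ h1
      exact Jterm_subset_FF R J D hKC (J_mono hJ hKC.le hsub h2)

lemma res_FF (hJ : IsSubInductor J) (hD : RStable D) :
    ∀ (n : ℕ) (C : Subgroup G), Nat.card ↥C ≤ n →
      ∀ (B : Subgroup G) (hB : B ≤ C), msub R B = B →
      ∀ χ ∈ FF R J D C, resChar hB χ ∈ FF R J D B := by
  intro n
  induction n with
  | zero => intro C hC; have := Nat.card_pos (α := ↥C); omega
  | succ n IH =>
    intro C hC B hB hBcof χ hχ
    rw [FF_eq] at hχ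
    rcases hχ with (h1 | h1) | h1
    · rw [Set.mem_singleton_iff] at h1
      subst h1
      rw [resChar_one]
      exact one_mem_FF R J D B
    · exact D_subset_FF R J D B (hD hB (Set.mem_image_of_mem _ h1))
    · rw [Set.mem_iUnion] at h1
      obtain ⟨K, h1⟩ := h1
      rw [Set.mem_iUnion] at h1
      obtain ⟨hKC, h1⟩ := h1
      have hcardK : Nat.card ↥(msub R K) ≤ n := by
        have := lt_of_le_of_lt (Subgroup.card_le_of_le (msub_le R K)) (subgroup_card_lt hKC)
        omega
      by_cases hBK : B ≤ K
      · -- restrict through K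
        have h2 : resChar hKC.le χ ∈ resChar (msub_le R K) ⁻¹' FF R J D (msub R K) := by
          rw [← hJ.res_cover hKC.le (resChar (msub_le R K) ⁻¹' FF R J D (msub R K))]
          exact Set.mem_image_of_mem _ h1
        have hBm : B ≤ msub R K := by
          rw [← hBcof]; exact msub_mono R hBK
        have h3 := IH (msub R K) hcardK B hBm hBcof (resChar (msub_le R K) (resChar hKC.le χ)) h2
        rw [resChar_resChar, resChar_resChar] at h3
        exact h3
      · have hlt : B ⊓ K < B := by
          rcases lt_or_eq_of_le (inf_le_left : B ⊓ K ≤ B) with h' | h'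
          · exact h'
          · exact absurd (h' ▸ inf_le_right) hBK
        have h3 := hJ.res_le hB hKC.le (resChar (msub_le R K) ⁻¹' FF R J D (msub R K))
        have h4 := h3 (Set.mem_image_of_mem _ h1)
        have h5 : resChar (inf_le_right : B ⊓ K ≤ K) ''
              (resChar (msub_le R K) ⁻¹' FF R J D (msub R K)) ⊆
            resChar (msub_le R (B ⊓ K)) ⁻¹' FF R J D (msub R (B ⊓ K)) := by
          rintro _ ⟨χ', hχ', rfl⟩
          show resChar (msub_le R (B ⊓ K)) (resChar (inf_le_right : B ⊓ K ≤ K) χ') ∈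
            FF R J D (msub R (B ⊓ K))
          have hm : msub R (B ⊓ K) ≤ msub R K := msub_mono R inf_le_right
          have h6 := IH (msub R K) hcardK (msub R (B ⊓ K)) hm (msub_idem R _) (resChar (msub_le R K) χ') hχ'
          rw [resChar_resChar] at h6
          rw [resChar_resChar]
          exact h6
        have h7 := J_mono hJ inf_le_left h5 h4
        exact Jterm_subset_FF R J D hlt h7

lemma cover_FF (hJ : IsSubInductor J) {C : Subgroup G} (hC : msub R C = C)
    {K : Subgroup G} (hK : K ≤ C) (ξ : CharGp K)
    (hξ : ∀ (B : Subgroup G) (hB : B ≤ K), msub R B = B → resChar hB ξ ∈ FF R J D B) :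
    ∃ χ ∈ FF R J D C, resChar hK χ = ξ := by
  rcases lt_or_eq_of_le hK with hlt | heq
  · have hmem : ξ ∈ resChar (msub_le R K) ⁻¹' FF R J D (msub R K) :=
      hξ (msub R K) (msub_le R K) (msub_idem R K)
    have hcov := hJ.res_cover hlt.le (resChar (msub_le R K) ⁻¹' FF R J D (msub R K))
    rw [← hcov] at hmem
    obtain ⟨χ, hχJ, hχ⟩ := hmem
    exact ⟨χ, Jterm_subset_FF R J D hlt hχJ, hχ⟩
  · subst heq
    refine ⟨ξ, ?_, resChar_rfl ξ⟩
    have := hξ K le_rfl hC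
    rwa [resChar_rfl] at this

end FFdef

section MainSec
variable {G : Type*} [CommGroup G] [Fintype G]
  {R : TransferSystem G}
  {J : ∀ K H : Subgroup G, K ≤ H → Set (CharGp K) → Set (CharGp H)}
  {D : ∀ H : Subgroup G, Set (CharGp H)}

/-- The stable diagram induced by `F`. -/
def EE (R : TransferSystem G) (J : ∀ K H : Subgroup G, K ≤ H → Set (CharGp K) → Set (CharGp H))
    (D : ∀ H : Subgroup G, Set (CharGp H)) (K : Subgroup G) : Set (CharGp K) :=
  {ξ | ∀ (B : Subgroup G) (hB : B ≤ K), msub R B = B → resChar hB ξ ∈ FF R J D B}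

/-- The candidate set `U`. -/
def UU (R : TransferSystem G) (J : ∀ K H : Subgroup G, K ≤ H → Set (CharGp K) → Set (CharGp H))
    (D : ∀ H : Subgroup G, Set (CharGp H)) : Set (CharGp G) :=
  {χ | ∀ B : Subgroup G, msub R B = B → resCharTop B χ ∈ FF R J D B}

lemma image_UU (hJ : IsSubInductor J) (hD : RStable D) (K : Subgroup G) :
    resCharTop K '' UU R J D = EE R J D K := by
  apply Set.Subset.antisymm
  · rintro _ ⟨χ, hχ, rfl⟩ B hB hBcof
    rw [resChar_resCharTop]
    exact hχ B hBcof
  · intro ξ hξ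
    have hNcof : msub R (msub R (⊤ : Subgroup G)) = msub R ⊤ := msub_idem R ⊤
    have hξL : ∀ (B : Subgroup G) (hB : B ≤ K ⊓ msub R ⊤), msub R B = B →
        resChar hB (resChar (inf_le_left : K ⊓ msub R ⊤ ≤ K) ξ) ∈ FF R J D B := by
      intro B hB hBc
      rw [resChar_resChar]
      exact hξ B (hB.trans inf_le_left) hBc
    obtain ⟨ψ, hψFF, hψres⟩ := cover_FF hJ hNcof (inf_le_right : K ⊓ msub R ⊤ ≤ msub R ⊤)
      (resChar inf_le_left ξ) hξL
    have hagree : ∀ (x : G) (hK : x ∈ K) (hN : x ∈ msub R ⊤),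
        ξ ⟨x, hK⟩ = ψ ⟨x, hN⟩ := by
      intro x hK hN
      have h := DFunLike.congr_fun hψres (⟨x, ⟨hK, hN⟩⟩ : ↥(K ⊓ msub R ⊤))
      exact h.symm
    obtain ⟨θ, hθK, hθN⟩ := char_glue K (msub R ⊤) ξ ψ hagree
    refine ⟨θ, ?_, hθK⟩
    intro B hBcof
    have hBN : B ≤ msub R ⊤ := by rw [← hBcof]; exact msub_mono R le_top
    have e1 : resCharTop B θ = resChar hBN (resCharTop (msub R ⊤) θ) :=
      (resChar_resCharTop hBN θ).symm
    rw [e1, hθN]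
    exact res_FF hJ hD (Nat.card ↥(msub R ⊤)) (msub R ⊤) le_rfl B hBN hBcof ψ hψFF

lemma rel_ind {K H : Subgroup G} (hrel : R.rel K H) (χ : CharGp H)
    (hχ : resChar (R.le_of_rel hrel) χ ∈ EE R J D K) : χ ∈ EE R J D H := by
  intro B hB hBcof
  have hBK : B ≤ K := by rw [← hBcof]; exact (msub_mono R hB).trans (msub_min R hrel)
  have h := hχ B hBK hBcof
  rw [resChar_resChar] at h
  exact h

lemma sep (hJ : IsSubInductor J) (hD : RStable D)
    (hmain : ∀ H : Subgroup G, R.Cofibrant H → ∀ (K : Subgroup G) (hK : K < H),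
      ¬ (resChar hK.le ⁻¹' D K ⊆ D H ∪ resJ J H))
    {K H : Subgroup G} (hKH : K ≤ H) (hnot : ¬ msub R H ≤ K) :
    ∃ χ : CharGp H, resChar hKH χ ∈ EE R J D K ∧ χ ∉ EE R J D H := by
  have hCC' : msub R K < msub R H :=
    lt_of_le_of_ne (msub_mono R hKH) (fun e => hnot (e ▸ msub_le R K))
  have h1 := hmain (msub R H) (msub_cofibrant R H) (msub R K) hCC'
  rw [Set.not_subset] at h1
  obtain ⟨χt, hχtmem, hχtnot⟩ := h1
  have hbot : (⊥ : Subgroup G) < msub R H := by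
    rcases (bot_le : (⊥ : Subgroup G) ≤ msub R H).lt_or_eq with h | h
    · exact h
    · exfalso; rw [← h] at hCC'; exact not_lt_bot hCC'
  have hχtFF : χt ∉ FF R J D (msub R H) := by
    intro hmem
    rcases FF_subset R D hJ (msub R H) hmem with (h' | h') | h'
    · rw [Set.mem_singleton_iff] at h'
      subst h'
      exact hχtnot (Set.mem_union_right _ (one_mem_resJ hJ hbot))
    · exact hχtnot (Set.mem_union_left _ h')
    · exact hχtnot (Set.mem_union_right _ h')
  obtain ⟨χ, hχ⟩ := resChar_surjective (msub_le R H) χt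
  refine ⟨χ, ?_, ?_⟩
  · intro B hB hBcof
    have hBC' : B ≤ msub R K := by rw [← hBcof]; exact msub_mono R hB
    have e1 : resChar hB (resChar hKH χ) =
        resChar hBC' (resChar hCC'.le (resChar (msub_le R H) χ)) := by
      rw [resChar_resChar, resChar_resChar, resChar_resChar]
    rw [e1, hχ]
    have h2 : resChar hBC' (resChar hCC'.le χt) ∈ D B :=
      hD hBC' (Set.mem_image_of_mem _ hχtmem)
    exact D_subset_FF R J D B h2
  · intro hmem
    have h3 := hmem (msub R H) (msub_le R H) (msub_idem R H)
    rw [hχ] at h3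
    exact hχtFF h3

end MainSec

/-- **Main theorem on realizing saturated transfer systems.**
Let `G` be a finite abelian group and `ℛ` a saturated transfer system on `G`.
Suppose there exist a sub-inductor `J` and an `R`-stable diagram `D`, each `D(H)`
closed under conjugation, such that for every `ℛ`-cofibrant `H` and every `K < H`,
`I_K^H(D(K)) ⊄ D(H) ∪ Res_J(H)`. Then some `U ∈ 𝒰_G` has `Tr(U) = ℛ`. -/
theorem main_realization (G : Type*) [CommGroup G] [Fintype G]
    (R : TransferSystem G) (hR : R.Saturated)
    (J : ∀ K H : Subgroup G, K ≤ H → Set (CharGp K) → Set (CharGp H))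
    (hJ : IsSubInductor J)
    (D : ∀ H : Subgroup G, Set (CharGp H)) (hD : RStable D)
    (hconj : ∀ H : Subgroup G, ∀ χ ∈ D H, charConj χ ∈ D H)
    (hmain : ∀ H : Subgroup G, R.Cofibrant H → ∀ (K : Subgroup G) (hK : K < H),
      ¬ (resChar hK.le ⁻¹' D K ⊆ D H ∪ resJ J H)) :
    ∃ U ∈ UnivSet G, ∀ K H : Subgroup G, R.rel K H ↔ TrRel U K H := by
  refine ⟨UU R J D, ⟨?_, ?_⟩, ?_⟩
  · intro B hBcof
    rw [resCharTop_one]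
    exact one_mem_FF R J D B
  · intro χ hχ B hBcof
    rw [resCharTop_charConj]
    exact conj_FF hJ hconj (Nat.card ↥B) B le_rfl (resCharTop B χ) (hχ B hBcof)
  · intro K H
    constructor
    · intro hrel
      refine ⟨R.le_of_rel hrel, ?_⟩
      intro χ hχ
      rw [Set.mem_preimage, image_UU hJ hD] at hχ
      rw [image_UU hJ hD]
      exact rel_ind hrel χ hχ
    · rintro ⟨h, hsub⟩
      by_contra hnrel
      have hnot : ¬ msub R H ≤ K := fun hle => hnrel ((rel_iff_msub R hR).2 ⟨hle, h⟩)
      obtain ⟨χ, hχK, hχH⟩ := sep hJ hD hmain h hnot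
      have h4 : χ ∈ resChar h ⁻¹' (resCharTop K '' UU R J D) := by
        rw [Set.mem_preimage, image_UU hJ hD]
        exact hχK
      have h5 := hsub h4
      rw [image_UU hJ hD] at h5
      exact hχH h5
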